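/- Let t be a complete full binary tree. Then for every depth d, at most one of the subtrees of t rooted at a node of depth d fails to be perfect. -/

import Mathlib

/-- A full binary tree: either a leaf or an ordered pair of full binary
trees. -/
inductive BTree where
  | leaf
  | node (t₁ t₂ : BTree)

namespace BTree

/-- Number of leaves. -/
def leaves : BTree → ℕ
  | .leaf => 1
  | .node t₁ t₂ => t₁.leaves + t₂.leaves

/-- Height of the tree (a single leaf has height `0`). -/
def height : BTree → ℕ
  | .leaf => 0
  | .node t₁ t₂ => max t₁.height t₂.height + 1

/-- A tree is perfect if all of its leaves are at the same depth. -/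
def Perfect : BTree → Prop
  | .leaf => True
  | .node t₁ t₂ => t₁.Perfect ∧ t₂.Perfect ∧ t₁.height = t₂.height

/-- A tree is complete if every level except possibly the last is completely
filled, and all leaves in the last level are as far left as possible:
a node is complete iff either its left subtree is perfect and its right
subtree is complete, of equal heights, or its left subtree is complete and
its right subtree is perfect, of height one less. -/
def Complete : BTree → Prop
  | .leaf => True
  | .node t₁ t₂ =>
      (t₁.Perfect ∧ t₂.Complete ∧ t₁.height = t₂.height) ∨
      (t₁.Complete ∧ t₂.Perfect ∧ t₁.height = t₂.height + 1)

/-- Deciding perfection. -/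
instance perfectDecidable : (t : BTree) → Decidable t.Perfect
  | .leaf => .isTrue trivial
  | .node t₁ t₂ =>
      haveI : Decidable t₁.Perfect := perfectDecidable t₁
      haveI : Decidable t₂.Perfect := perfectDecidable t₂
      inferInstanceAs (Decidable (t₁.Perfect ∧ t₂.Perfect ∧ t₁.height = t₂.height))

/-- The list of subtrees of `t` rooted at the nodes of depth `d`, in
left-to-right order. -/
def subtreesAt : ℕ → BTree → List BTree
  | 0, t => [t]
  | _ + 1, .leaf => []
  | d + 1, .node t₁ t₂ => subtreesAt d t₁ ++ subtreesAt d t₂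

end BTree

/-- In a complete full binary tree, for every depth `d`, at
most one of the subtrees rooted at a node of depth `d` fails to be perfect. -/
lemma perfect_subtreesAt (d : ℕ) (t : BTree) (ht : t.Perfect) :
    ∀ s ∈ BTree.subtreesAt d t, s.Perfect := by
  induction d generalizing t with
  | zero => intro s hs; simp [BTree.subtreesAt] at hs; subst hs; exact ht
  | succ d ih =>
    cases t with
    | leaf => intro s hs; simp [BTree.subtreesAt] at hs
    | node t₁ t₂ =>
      intro s hs
      simp [BTree.subtreesAt] at hs
      obtain ⟨h1, h2, _⟩ := ht
      rcases hs with h | h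
      · exact ih t₁ h1 s h
      · exact ih t₂ h2 s h

lemma perfect_countP_zero (d : ℕ) (t : BTree) (ht : t.Perfect) :
    ((BTree.subtreesAt d t).countP (fun s => decide (¬ s.Perfect))) = 0 := by
  rw [List.countP_eq_zero]
  intro s hs
  simp [perfect_subtreesAt d t ht s hs]

theorem complete_at_most_one_imperfect_per_depth
    (t : BTree) (ht : t.Complete) (d : ℕ) :
    ((BTree.subtreesAt d t).countP (fun s => decide (¬ s.Perfect))) ≤ 1 := by
  induction d generalizing t with
  | zero =>
    calc _ ≤ (BTree.subtreesAt 0 t).length := List.countP_le_length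
    _ = 1 := rfl
  | succ d ih =>
    cases t with
    | leaf => simp [BTree.subtreesAt]
    | node t₁ t₂ =>
      rw [show BTree.subtreesAt (d+1) (.node t₁ t₂)
          = BTree.subtreesAt d t₁ ++ BTree.subtreesAt d t₂ from rfl,
        List.countP_append]
      rcases ht with ⟨h1, h2, _⟩ | ⟨h1, h2, _⟩
      · rw [perfect_countP_zero d t₁ h1]
        simpa using ih t₂ h2
      · rw [perfect_countP_zero d t₂ h2]
        simpa using ih t₁ h1
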